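/- Let f : ℝ → ℝ be 2π-periodic, Lipschitz continuous, and satisfy 0 < f(α) for all α; set λ* := max_{α∈[0,2π]} f(α) and ω* := √λ*. For ω > ω*, define T⁰(ω) := (1/2π)∫₀^{2π} f(α)/(ω² − f(α)) dα. Then T⁰(ω) → +∞ as ω → ω* from above. -/

import Mathlib

open scoped Real
open Filter

/-- for a Lipschitz band function f, the single-defect function
T⁰(ω) = (1/2π)∫₀^{2π} f(α)/(ω² − f(α)) dα diverges to +∞ as ω approaches the band
edge ω* = √(max f) from above. -/
theorem stmt_9
    (f : ℝ → ℝ)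
    (hf_per : Function.Periodic f (2 * π))
    (L : NNReal) (hf_lip : LipschitzWith L f)
    (hf_pos : ∀ α : ℝ, 0 < f α)
    (lamStar : ℝ) (hlam : IsGreatest (f '' Set.Icc 0 (2 * π)) lamStar)
    (ωStar : ℝ) (hωStar : ωStar = Real.sqrt lamStar)
    (T0 : ℝ → ℝ)
    (hT0 : ∀ ω : ℝ, ωStar < ω →
      T0 ω = (1 / (2 * π)) * ∫ α in (0:ℝ)..(2 * π), f α / (ω ^ 2 - f α)) :
    Tendsto T0 (nhdsWithin ωStar (Set.Ioi ωStar)) atTop := by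
  have hπ : (0:ℝ) < π := Real.pi_pos
  have h2π : (0:ℝ) < 2 * π := by linarith
  obtain ⟨⟨α₀, hα₀mem, hα₀⟩, hub⟩ := hlam
  have hlampos : 0 < lamStar := hα₀ ▸ hf_pos α₀
  have hωSpos : 0 < ωStar := hωStar ▸ Real.sqrt_pos.mpr hlampos
  -- global bound f α ≤ lamStar
  have hglob : ∀ α, f α ≤ lamStar := by
    intro α
    obtain ⟨y, hy, hxy⟩ := hf_per.exists_mem_Ico₀ h2π α
    rw [hxy]
    exact hub ⟨y, ⟨hy.1, hy.2.le⟩, rfl⟩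
  set L₁ : ℝ := (L : ℝ) + 1 with hL₁def
  have hL₁ : 0 < L₁ := by positivity
  have hlip' : ∀ x y : ℝ, |f x - f y| ≤ L₁ * |x - y| := by
    intro x y
    have h := hf_lip.dist_le_mul x y
    rw [Real.dist_eq, Real.dist_eq] at h
    have hL : (L:ℝ) ≤ L₁ := by simp [hL₁def]
    nlinarith [abs_nonneg (x - y)]
  set δ : ℝ := min π (lamStar / (2 * L₁)) with hδdef
  have hδpos : 0 < δ := lt_min hπ (by positivity)
  have hδπ : δ ≤ π := min_le_left _ _
  have hδhalf : lamStar / 2 ≤ lamStar - L₁ * δ := by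
    have h1 : δ ≤ lamStar / (2 * L₁) := min_le_right _ _
    rw [le_div_iff₀ (by positivity : (0:ℝ) < 2 * L₁)] at h1
    nlinarith
  have hlamhalf : 0 < lamStar / 2 := by positivity
  clear_value L₁ δ
  -- basic facts for ω > ωStar
  have hω2 : ∀ ω : ℝ, ωStar < ω → lamStar < ω ^ 2 := by
    intro ω hω
    have h1 : ωStar ^ 2 < ω ^ 2 := by nlinarith
    have h2 : ωStar ^ 2 = lamStar := by
      rw [hωStar, sq, Real.mul_self_sqrt hlampos.le]
    linarith
  -- main lower bound
  have key : ∀ ω : ℝ, ωStar < ω →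
      (1 / (2 * π)) * ((lamStar / 2) * ((1 / L₁) *
        (Real.log (ω ^ 2 - lamStar + L₁ * δ) - Real.log (ω ^ 2 - lamStar)))) ≤ T0 ω := by
    intro ω hω
    have hε : 0 < ω ^ 2 - lamStar := sub_pos.mpr (hω2 ω hω)
    set ε : ℝ := ω ^ 2 - lamStar with hεdef
    have hden : ∀ α : ℝ, 0 < ω ^ 2 - f α := fun α =>
      sub_pos.mpr (lt_of_le_of_lt (hglob α) (hω2 ω hω))
    have hcontf : Continuous f := hf_lip.continuous
    have hcont : Continuous (fun α => f α / (ω ^ 2 - f α)) :=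
      hcontf.div (continuous_const.sub hcontf) (fun α => ne_of_gt (hden α))
    -- lower bound function
    set g : ℝ → ℝ := fun α => (lamStar / 2) / (ε + L₁ * (α - α₀)) with hgdef
    have hgden : ∀ α ∈ Set.Icc α₀ (α₀ + δ), 0 < ε + L₁ * (α - α₀) := by
      intro α hα
      have : 0 ≤ α - α₀ := by linarith [hα.1]
      nlinarith
    -- pointwise bound on [α₀, α₀ + δ]
    have hpt : ∀ α ∈ Set.Icc α₀ (α₀ + δ), g α ≤ f α / (ω ^ 2 - f α) := by
      intro α hα
      have habs := hlip' α α₀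
      have h1 : |α - α₀| ≤ δ := by
        rw [abs_le]; constructor <;> [linarith [hα.1]; linarith [hα.2]]
      have h2 : f α₀ - f α ≤ L₁ * |α - α₀| := by
        have := abs_le.mp (abs_sub_comm (f α) (f α₀) ▸ habs)
        linarith [this.2]
      have habs' : |α - α₀| = α - α₀ := abs_of_nonneg (by linarith [hα.1])
      have hflb : lamStar - L₁ * (α - α₀) ≤ f α := by
        rw [habs'] at h2; rw [hα₀] at h2; linarith
      have hfhalf : lamStar / 2 ≤ f α := by
        have : L₁ * (α - α₀) ≤ L₁ * δ := by
          have := h1; rw [habs'] at this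
          exact mul_le_mul_of_nonneg_left this hL₁.le
        linarith
      have hdle : ω ^ 2 - f α ≤ ε + L₁ * (α - α₀) := by
        rw [hεdef]; linarith
      exact div_le_div₀ (hf_pos α).le hfhalf (hden α) hdle
    -- integral of lower bound
    have hgcont : ContinuousOn g (Set.Icc α₀ (α₀ + δ)) := by
      apply ContinuousOn.div continuousOn_const
      · exact (continuous_const.add (continuous_const.mul (continuous_id.sub continuous_const))).continuousOn
      · exact fun α hα => ne_of_gt (hgden α hα)
    have hδle : α₀ ≤ α₀ + δ := by linarith
    have hgint : IntervalIntegrable g MeasureTheory.volume α₀ (α₀ + δ) := by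
      apply ContinuousOn.intervalIntegrable
      rwa [Set.uIcc_of_le hδle]
    have hfint : ∀ a b : ℝ, IntervalIntegrable (fun α => f α / (ω ^ 2 - f α))
        MeasureTheory.volume a b := fun a b => hcont.intervalIntegrable a b
    -- compute ∫ g via antiderivative
    have hgval : ∫ α in α₀..(α₀ + δ), g α
        = (lamStar / 2) * ((1 / L₁) * (Real.log (ε + L₁ * δ) - Real.log ε)) := by
      have hderiv : ∀ α ∈ Set.uIcc α₀ (α₀ + δ),
          HasDerivAt (fun x => (lamStar / 2) * ((1 / L₁) * Real.log (ε + L₁ * (x - α₀)))) (g α) α := by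
        intro α hα
        rw [Set.uIcc_of_le hδle] at hα
        have hne : ε + L₁ * (α - α₀) ≠ 0 := ne_of_gt (hgden α hα)
        have h1 : HasDerivAt (fun x : ℝ => ε + L₁ * (x - α₀)) L₁ α := by
          simpa using (((hasDerivAt_id α).sub_const α₀).const_mul L₁).const_add ε
        have h2 : HasDerivAt (fun x => Real.log (ε + L₁ * (x - α₀)))
            (L₁ / (ε + L₁ * (α - α₀))) α := by
          simpa [div_eq_mul_inv, mul_comm, Function.comp_def] using (Real.hasDerivAt_log hne).comp α h1
        have h3 := (h2.const_mul ((lamStar / 2) * (1 / L₁)))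
        convert h3.congr_deriv ?_ using 1
        · ext x; ring
        · rfl
        · ext x; ring
        · rw [hgdef]; field_simp
      rw [intervalIntegral.integral_eq_sub_of_hasDerivAt hderiv hgint]
      simp only [add_sub_cancel_left, sub_self, mul_zero, add_zero]
      ring
    -- chain of inequalities
    have hδ2π : α₀ + δ ≤ α₀ + 2 * π := by linarith
    have hper : Function.Periodic (fun α => f α / (ω ^ 2 - f α)) (2 * π) := by
      intro x; simp [hf_per x]
    have hshift : ∫ α in (0:ℝ)..(2 * π), f α / (ω ^ 2 - f α)
        = ∫ α in α₀..(α₀ + 2 * π), f α / (ω ^ 2 - f α) := by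
      have := hper.intervalIntegral_add_eq α₀ 0
      simpa using this.symm
    have hsplit : ∫ α in α₀..(α₀ + 2 * π), f α / (ω ^ 2 - f α)
        = (∫ α in α₀..(α₀ + δ), f α / (ω ^ 2 - f α))
          + ∫ α in (α₀ + δ)..(α₀ + 2 * π), f α / (ω ^ 2 - f α) :=
      (intervalIntegral.integral_add_adjacent_intervals (hfint _ _) (hfint _ _)).symm
    have htail : 0 ≤ ∫ α in (α₀ + δ)..(α₀ + 2 * π), f α / (ω ^ 2 - f α) := by
      apply intervalIntegral.integral_nonneg (by linarith)
      intro u _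
      exact le_of_lt (div_pos (hf_pos u) (hden u))
    have hmono : ∫ α in α₀..(α₀ + δ), g α
        ≤ ∫ α in α₀..(α₀ + δ), f α / (ω ^ 2 - f α) :=
      intervalIntegral.integral_mono_on hδle hgint (hfint _ _) hpt
    have hfinal : (lamStar / 2) * ((1 / L₁) * (Real.log (ε + L₁ * δ) - Real.log ε))
        ≤ ∫ α in (0:ℝ)..(2 * π), f α / (ω ^ 2 - f α) := by
      rw [hshift, hsplit, ← hgval]
      linarith
    rw [hT0 ω hω]
    have h2πinv : 0 < 1 / (2 * π) := by positivity
    exact mul_le_mul_of_nonneg_left hfinal h2πinv.le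
  -- the lower bound tends to atTop
  have hεtend : Tendsto (fun ω : ℝ => ω ^ 2 - lamStar)
      (nhdsWithin ωStar (Set.Ioi ωStar)) (nhdsWithin 0 (Set.Ioi 0)) := by
    apply tendsto_nhdsWithin_of_tendsto_nhds_of_eventually_within
    · have : Continuous (fun ω : ℝ => ω ^ 2 - lamStar) := by continuity
      have h := this.tendsto ωStar
      have hval : ωStar ^ 2 - lamStar = 0 := by
        rw [hωStar, sq, Real.mul_self_sqrt hlampos.le]; ring
      rw [hval] at h
      exact h.mono_left nhdsWithin_le_nhds
    · filter_upwards [self_mem_nhdsWithin] with ω hω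
      exact sub_pos.mpr (hω2 ω hω)
  have hlog1 : Tendsto (fun ω : ℝ => Real.log (ω ^ 2 - lamStar + L₁ * δ))
      (nhdsWithin ωStar (Set.Ioi ωStar)) (nhds (Real.log (L₁ * δ))) := by
    have hc : ContinuousAt Real.log (0 + L₁ * δ) :=
      Real.continuousAt_log (by positivity)
    have := hc.tendsto.comp ((hεtend.mono_right nhdsWithin_le_nhds).add_const (L₁ * δ))
    simpa [Function.comp_def] using this
  have hlog2 : Tendsto (fun ω : ℝ => Real.log (ω ^ 2 - lamStar))
      (nhdsWithin ωStar (Set.Ioi ωStar)) atBot :=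
    Real.tendsto_log_nhdsGT_zero.comp hεtend
  have hdiff : Tendsto (fun ω : ℝ =>
      Real.log (ω ^ 2 - lamStar + L₁ * δ) - Real.log (ω ^ 2 - lamStar))
      (nhdsWithin ωStar (Set.Ioi ωStar)) atTop :=
    by
      have hneg := tendsto_neg_atBot_atTop.comp hlog2
      simpa [sub_eq_add_neg, Function.comp] using hlog1.add_atTop hneg
  have hLB : Tendsto (fun ω : ℝ => (1 / (2 * π)) * ((lamStar / 2) * ((1 / L₁) *
      (Real.log (ω ^ 2 - lamStar + L₁ * δ) - Real.log (ω ^ 2 - lamStar)))))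
      (nhdsWithin ωStar (Set.Ioi ωStar)) atTop := by
    have h1 := hdiff.const_mul_atTop (show (0:ℝ) < 1 / L₁ by positivity)
    have h2 := h1.const_mul_atTop hlamhalf
    exact h2.const_mul_atTop (show (0:ℝ) < 1 / (2 * π) by positivity)
  apply tendsto_atTop_mono' _ _ hLB
  filter_upwards [self_mem_nhdsWithin] with ω hω
  exact key ω hω
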